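/- Let m ≥ 1 be an integer, M a nonempty set, and G_α : M → M for α ∈ {1,…,m} all surjective, with G_α ∘ G_β = G_β ∘ G_α for all α, β ∈ {1,…,m}. Then for every (t₀, x₀) ∈ ℤ^m × M there exists at least one function x : ℤ^m → M satisfying x(t + 1_α) = G_α(x(t)) for all t ∈ ℤ^m and all α ∈ {1,…,m}, and x(t₀) = x₀. -/

import Mathlib

/-- `1_α ∈ ℤ^m` is nonnegative, so `t₁ ≤ t` implies `t₁ ≤ t + 1_α`
(componentwise order on `ℤ^m`). -/
theorem le_stepv {m : ℕ} {t₁ t : Fin m → ℤ} (h : t₁ ≤ t) (α : Fin m) :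
    t₁ ≤ t + Pi.single α 1 :=
  le_trans h (le_add_of_nonneg_right (by
    intro β
    by_cases hb : β = α <;> simp [Pi.single_apply, hb]))

/-- The shift `t ↦ t + 1_α` on `{t ∈ ℤ^m | t ≥ t₁}`. -/
def stepv {m : ℕ} {t₁ : Fin m → ℤ} (t : {t : Fin m → ℤ // t₁ ≤ t}) (α : Fin m) :
    {t : Fin m → ℤ // t₁ ≤ t} :=
  ⟨t.1 + Pi.single α 1, le_stepv t.2 α⟩

theorem sub_single_le {m : ℕ} (t₀ : Fin m → ℤ) (α : Fin m) :
    t₀ - Pi.single α 1 ≤ t₀ :=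
  sub_le_self _ (by
    intro β
    by_cases hb : β = α <;> simp [Pi.single_apply, hb])

/-- `G₁^{(k 1)} ∘ G₂^{(k 2)} ∘ ⋯ ∘ G_m^{(k m)}`. -/
def iterAll {m : ℕ} {M : Type*} (G : Fin m → M → M) (k : Fin m → ℕ) : M → M :=
  (List.finRange m).foldr (fun α f => (G α)^[k α] ∘ f) id


section Aux

variable {m : ℕ} {M : Type*} (G : Fin m → M → M)

/-- foldr of iterates over a list. -/
def iterListAux (k : Fin m → ℕ) (l : List (Fin m)) : M → M :=
  l.foldr (fun β f => (G β)^[k β] ∘ f) id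

theorem commute_iterListAux (hC : ∀ α β, Function.Commute (G α) (G β))
    (k : Fin m → ℕ) (l : List (Fin m)) (α : Fin m) :
    Function.Commute (G α) (iterListAux G k l) := by
  induction l with
  | nil => intro x; rfl
  | cons γ l ih =>
    intro x
    show G α ((G γ)^[k γ] (iterListAux G k l x)) =
      (G γ)^[k γ] (iterListAux G k l (G α x))
    rw [(hC α γ).iterate_right (k γ) _, ih _]

theorem iterListAux_add (hC : ∀ α β, Function.Commute (G α) (G β))
    (k k' : Fin m → ℕ) (l : List (Fin m)) (x : M) :
    iterListAux G (k + k') l x = iterListAux G k l (iterListAux G k' l x) := by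
  induction l with
  | nil => rfl
  | cons γ l ih =>
    show (G γ)^[k γ + k' γ] (iterListAux G (k + k') l x) =
      (G γ)^[k γ] (iterListAux G k l ((G γ)^[k' γ] (iterListAux G k' l x)))
    rw [Function.iterate_add_apply, ih,
      ((commute_iterListAux G hC k l γ).iterate_left (k' γ)) _]

theorem iterListAux_zero (l : List (Fin m)) (x : M) :
    iterListAux G 0 l x = x := by
  induction l with
  | nil => rfl
  | cons γ l ih => show (G γ)^[0] (iterListAux G 0 l x) = x; simpa using ih

theorem iterListAux_surj (hs : ∀ α, Function.Surjective (G α))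
    (k : Fin m → ℕ) (l : List (Fin m)) :
    Function.Surjective (iterListAux G k l) := by
  induction l with
  | nil => exact Function.surjective_id
  | cons γ l ih =>
    exact (((hs γ).iterate (k γ)).comp ih : _)

theorem iterListAux_single_not_mem (α : Fin m) (l : List (Fin m)) (hα : α ∉ l) (x : M) :
    iterListAux G (Pi.single α 1) l x = x := by
  induction l with
  | nil => rfl
  | cons γ l ih =>
    have hγ : γ ≠ α := fun h => hα (h ▸ List.mem_cons_self)
    show (G γ)^[(Pi.single α 1 : Fin m → ℕ) γ] (iterListAux G (Pi.single α 1) l x) = x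
    rw [Pi.single_apply]
    simp only [if_neg hγ]
    exact ih (fun h => hα (List.mem_cons_of_mem _ h))

theorem iterListAux_single_mem (α : Fin m) (l : List (Fin m)) (hα : α ∈ l)
    (hnd : l.Nodup) (x : M) :
    iterListAux G (Pi.single α 1) l x = G α x := by
  induction l with
  | nil => exact absurd hα List.not_mem_nil
  | cons γ l ih =>
    show (G γ)^[(Pi.single α 1 : Fin m → ℕ) γ] (iterListAux G (Pi.single α 1) l x) = G α x
    rcases List.mem_cons.mp hα with h | h
    · subst h
      have hnl : α ∉ l := (List.nodup_cons.mp hnd).1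
      rw [iterListAux_single_not_mem G α l hnl, Pi.single_apply, if_pos rfl]
      rfl
    · have hγ : γ ≠ α := by
        rintro rfl; exact (List.nodup_cons.mp hnd).1 h
      rw [Pi.single_apply, if_neg hγ]
      exact ih h (List.nodup_cons.mp hnd).2

end Aux

theorem val_stable {m : ℕ} {M : Type*} (G : Fin m → M → M)
    (hC : ∀ α β, Function.Commute (G α) (G β)) (z : ℕ → M)
    (hz : ∀ n, iterListAux G (fun _ => 1) (List.finRange m) (z (n+1)) = z n)
    (s : Fin m → ℤ) (n n' : ℕ) (h : n ≤ n') (hn : ∀ α, 0 ≤ s α + n) :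
    iterListAux G (fun α => (s α + n').toNat) (List.finRange m) (z n')
      = iterListAux G (fun α => (s α + n).toNat) (List.finRange m) (z n) := by
  induction n', h using Nat.le_induction with
  | base => rfl
  | succ n' hle ih =>
    have hk : (fun α => (s α + ((n'+1 : ℕ) : ℤ)).toNat)
        = (fun α => (s α + (n' : ℤ)).toNat) + (fun _ => 1) := by
      funext α
      have h1 := hn α
      simp only [Pi.add_apply]
      push_cast
      omega
    rw [hk, iterListAux_add G hC, hz n', ih]


/-- Proposition 2 c). If the maps `G_α` are surjective and pairwise
commute, then for every `(t₀, x₀) ∈ ℤ^m × M` there exists at least one function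
`x : ℤ^m → M` with `x(t+1_α) = G_α(x(t))` for all `t ∈ ℤ^m`, `α`, and `x(t₀) = x₀`. -/
theorem stmt_6 {m : ℕ} (hm : 1 ≤ m) {M : Type*} [Nonempty M]
    (G : Fin m → M → M)
    (hsurj : ∀ α : Fin m, Function.Surjective (G α))
    (hcomm : ∀ α β : Fin m, G α ∘ G β = G β ∘ G α) :
    ∀ (t₀ : Fin m → ℤ) (x₀ : M),
      ∃ x : (Fin m → ℤ) → M,
        (∀ (t : Fin m → ℤ) (α : Fin m), x (t + Pi.single α 1) = G α (x t)) ∧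
        x t₀ = x₀ := by
  intro t₀ x₀
  have hC : ∀ α β, Function.Commute (G α) (G β) := fun α β x => congrFun (hcomm α β) x
  obtain ⟨ψ, hψ⟩ :=
    (iterListAux_surj G hsurj (fun _ => 1) (List.finRange m)).hasRightInverse
  set z : ℕ → M := fun n => ψ^[n] x₀ with hzdef
  have hz : ∀ n, iterListAux G (fun _ => 1) (List.finRange m) (z (n+1)) = z n := by
    intro n
    show iterListAux G (fun _ => 1) (List.finRange m) (ψ^[n+1] x₀) = ψ^[n] x₀
    rw [Function.iterate_succ_apply']
    exact hψ _
  set N : (Fin m → ℤ) → ℕ := fun t => Finset.univ.sup (fun α => (-(t α - t₀ α)).toNat)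
    with hNdef
  have hN : ∀ t α, 0 ≤ t α - t₀ α + N t := by
    intro t α
    have h1 : (-(t α - t₀ α)).toNat ≤ N t := by
      simp only [hNdef]
      exact Finset.le_sup (f := fun α => (-(t α - t₀ α)).toNat) (Finset.mem_univ α)
    omega
  refine ⟨fun t => iterListAux G (fun α => (t α - t₀ α + N t).toNat)
    (List.finRange m) (z (N t)), ?_, ?_⟩
  · intro t α
    set t' := t + Pi.single α 1 with ht'
    set n := max (N t) (N t') with hndef
    have h0 : ∀ β, 0 ≤ t β - t₀ β + n := by
      intro β
      have h1 := hN t β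
      have h2 : N t ≤ n := le_max_left _ _
      omega
    have h1 : iterListAux G (fun β => (t' β - t₀ β + n).toNat) (List.finRange m) (z n)
        = iterListAux G (fun β => (t' β - t₀ β + N t').toNat) (List.finRange m) (z (N t')) :=
      val_stable G hC z hz _ (N t') n (le_max_right _ _) (hN t')
    have h2 : iterListAux G (fun β => (t β - t₀ β + n).toNat) (List.finRange m) (z n)
        = iterListAux G (fun β => (t β - t₀ β + N t).toNat) (List.finRange m) (z (N t)) :=
      val_stable G hC z hz _ (N t) n (le_max_left _ _) (hN t)
    show iterListAux G (fun β => (t' β - t₀ β + ((N t' : ℕ) : ℤ)).toNat) (List.finRange m) (z (N t'))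
      = G α (iterListAux G (fun β => (t β - t₀ β + ((N t : ℕ) : ℤ)).toNat) (List.finRange m) (z (N t)))
    rw [← h1, ← h2]
    have hk : (fun β => (t' β - t₀ β + (n : ℤ)).toNat)
        = (fun β => (t β - t₀ β + (n : ℤ)).toNat) + (Pi.single α 1 : Fin m → ℕ) := by
      funext β
      have hb := h0 β
      rw [ht']
      simp only [Pi.add_apply, Pi.single_apply]
      by_cases h : β = α
      · subst h
        simp
        omega
      · simp only [if_neg h]
        push_cast
        omega
    rw [hk, iterListAux_add G hC,
      iterListAux_single_mem G α _ (List.mem_finRange α) (List.nodup_finRange m),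
      ← commute_iterListAux G hC (fun β => (t β - t₀ β + (n : ℤ)).toNat) (List.finRange m) α (z n)]
  · have hst : iterListAux G (fun α => (t₀ α - t₀ α + ((N t₀ : ℕ) : ℤ)).toNat)
        (List.finRange m) (z (N t₀))
        = iterListAux G (fun α => (t₀ α - t₀ α + ((0:ℕ) : ℤ)).toNat) (List.finRange m) (z 0) :=
      val_stable G hC z hz (fun α => t₀ α - t₀ α) 0 (N t₀) (Nat.zero_le _)
        (fun α => by simp)
    show iterListAux G (fun α => (t₀ α - t₀ α + N t₀).toNat) (List.finRange m) (z (N t₀)) = x₀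
    rw [hst]
    have h3 : (fun α : Fin m => (t₀ α - t₀ α + ((0:ℕ) : ℤ)).toNat) = (0 : Fin m → ℕ) := by
      funext α; simp
    rw [h3, iterListAux_zero]
    exact Function.iterate_zero_apply ψ x₀
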